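/- For every K > 2 and every n ≥ 2^K − 1 with (2^K − 1) ∣ n, there exists a K-AND-OR-BN on n nodes that is observable with an observation set of size ((2^K − K − 1) * n) / (2^K − 1). -/

import Mathlib

/-- `F` is observable with observation set `S` if the map from an initial state to its
output sequence (the restriction of each iterate to `S`) is injective. -/
def observable {n : ℕ} (F : (Fin n → Bool) → (Fin n → Bool)) (S : Finset (Fin n)) : Prop :=
  Function.Injective (fun (x : Fin n → Bool) => fun (t : ℕ) (i : S) => (F^[t] x) i.val)

/-- `F` is a `K`-AND-OR-BN: each local function is the AND or the OR of `K` literals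
on pairwise distinct variables (a literal is `x_{i_j} XOR b_j`). -/
def isAndOrBN {n : ℕ} (K : ℕ) (F : (Fin n → Bool) → (Fin n → Bool)) : Prop :=
  ∀ i : Fin n, ∃ idx : Fin K → Fin n, Function.Injective idx ∧ ∃ b : Fin K → Bool,
    (∀ x, F x i = Finset.univ.inf (fun j => Bool.xor (x (idx j)) (b j))) ∨
    (∀ x, F x i = Finset.univ.sup (fun j => Bool.xor (x (idx j)) (b j)))

namespace BNaux

variable {K : ℕ}

/-- The `j`-th unit vector in `Fin K → Bool`. -/
def eK (j : Fin K) : Fin K → Bool := fun k => decide (k = j)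

/-- The "bad" states: the zero vector and the unit vectors. -/
def Bset (K : ℕ) : Finset (Fin K → Bool) :=
  insert (fun _ => false) (Finset.univ.image eK)

/-- The "good" states (weight at least two). -/
def Aset (K : ℕ) : Finset (Fin K → Bool) := (Bset K)ᶜ

/-- Hidden-node dynamics: `Gmap v j` is the OR of the literals `v k XOR eK j k`. -/
noncomputable def Gmap (v : Fin K → Bool) : Fin K → Bool :=
  fun j => Finset.univ.sup fun k => Bool.xor (v k) (eK j k)

lemma inf_xor (v a : Fin K → Bool) :
    (Finset.univ.inf fun k => Bool.xor (v k) (!a k)) = decide (v = a) := by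
  by_cases h : v = a
  · rw [decide_eq_true h]
    refine (Finset.inf_eq_top_iff _ _).mpr fun k _ => ?_
    subst h
    show Bool.xor (v k) (!v k) = ⊤
    cases v k <;> rfl
  · rw [decide_eq_false h]
    obtain ⟨k, hk⟩ := Function.ne_iff.mp h
    refine Bool.eq_false_iff.mpr fun htop => hk ?_
    have := (Finset.inf_eq_top_iff _ _).mp htop k (Finset.mem_univ k)
    revert this
    cases v k <;> cases a k <;> simp

lemma sup_xor (v b : Fin K → Bool) :
    (Finset.univ.sup fun k => Bool.xor (v k) (b k)) = !decide (v = b) := by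
  by_cases h : v = b
  · rw [decide_eq_true h, Bool.not_true]
    refine (Finset.sup_eq_bot_iff _ _).mpr fun k _ => ?_
    subst h
    show Bool.xor (v k) (v k) = ⊥
    cases v k <;> rfl
  · rw [decide_eq_false h, Bool.not_false]
    obtain ⟨k, hk⟩ := Function.ne_iff.mp h
    have hle := Finset.le_sup (f := fun k => Bool.xor (v k) (b k)) (Finset.mem_univ k)
    have ht : Bool.xor (v k) (b k) = true := by
      revert hk; cases v k <;> cases b k <;> simp
    refine eq_top_iff.mpr ?_
    calc (⊤ : Bool) = Bool.xor (v k) (b k) := ht.symm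
      _ ≤ _ := hle

lemma eK_injective : Function.Injective (eK (K := K)) := by
  intro j l h
  have := congrFun h j
  simp [eK] at this
  exact this

lemma mem_Bset {v : Fin K → Bool} :
    v ∈ Bset K ↔ v = (fun _ => false) ∨ ∃ j, v = eK j := by
  simp [Bset, eq_comm]

lemma exists_third (hK : 2 < K) (j l : Fin K) : ∃ k : Fin K, k ≠ j ∧ k ≠ l := by
  have hcard : ({j, l} : Finset (Fin K)).card < Fintype.card (Fin K) := by
    calc ({j, l} : Finset (Fin K)).card ≤ 2 := Finset.card_insert_le _ _ |>.trans (by simp)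
      _ < K := hK
      _ = Fintype.card (Fin K) := by simp
  obtain ⟨k, hk⟩ := Finset.card_pos.mp (by
    rw [Finset.card_compl]; omega : 0 < ({j, l} : Finset (Fin K))ᶜ.card)
  simp only [Finset.mem_compl, Finset.mem_insert, Finset.mem_singleton] at hk
  exact ⟨k, fun h => hk (Or.inl h), fun h => hk (Or.inr h)⟩

lemma Gmap_eq (v : Fin K → Bool) : Gmap v = fun j => !decide (v = eK j) := by
  funext j; exact sup_xor v (eK j)

lemma Gmap_zero : Gmap (K := K) (fun _ => false) = fun _ => true := by
  rw [Gmap_eq]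
  funext j
  have : (fun _ => false) ≠ eK j := fun h => by
    have := congrFun h j; simp [eK] at this
  simp [this]

lemma Gmap_eK (l : Fin K) : Gmap (eK l) = fun j => !eK l j := by
  rw [Gmap_eq]
  funext j
  have : decide (eK l = eK j) = decide (j = l) := by
    rcases eq_or_ne j l with h | h
    · simp [h]
    · have : eK l ≠ eK j := fun he => h (eK_injective he).symm
      simp [this, h]
  rw [this]; rfl

lemma Gmap_mem_Aset (hK : 2 < K) {v : Fin K → Bool} (hv : v ∈ Bset K) :
    Gmap v ∈ Aset K := by
  rw [Aset, Finset.mem_compl]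
  intro hmem
  rcases mem_Bset.mp hv with h0 | ⟨l, hl⟩
  · rw [h0, Gmap_zero] at hmem
    rcases mem_Bset.mp hmem with h | ⟨j, hj⟩
    · have := congrFun h ⟨0, by omega⟩; simp at this
    · obtain ⟨k, hkj, _⟩ := exists_third hK j j
      have := congrFun hj k
      simp [eK, hkj] at this
  · rw [hl, Gmap_eK] at hmem
    rcases mem_Bset.mp hmem with h | ⟨j, hj⟩
    · obtain ⟨k, hkl, _⟩ := exists_third hK l l
      have := congrFun h k
      simp [eK, hkl] at this
    · obtain ⟨k, hkj, hkl⟩ := exists_third hK j l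
      have := congrFun hj k
      simp [eK, hkj, hkl] at this

lemma Gmap_inj_Bset {u u' : Fin K → Bool} (hu : u ∈ Bset K) (hu' : u' ∈ Bset K)
    (h : Gmap u = Gmap u') : u = u' := by
  rcases mem_Bset.mp hu with h0 | ⟨l, hl⟩ <;> rcases mem_Bset.mp hu' with h0' | ⟨l', hl'⟩
  · rw [h0, h0']
  · rw [h0, Gmap_zero, hl', Gmap_eK] at h
    have := congrFun h l'
    simp [eK] at this
  · rw [h0', Gmap_zero, hl, Gmap_eK] at h
    have := congrFun h l
    simp [eK] at this
  · rw [hl, hl', Gmap_eK, Gmap_eK] at h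
    have : eK l = eK l' := by
      funext k
      have := congrFun h k
      exact Bool.not_inj this
    rw [hl, hl', eK_injective this]

lemma card_Bset : (Bset K).card = K + 1 := by
  rw [Bset, Finset.card_insert_of_notMem, Finset.card_image_of_injective _ eK_injective]
  · simp
  · intro hmem
    simp only [Finset.mem_image, Finset.mem_univ, true_and] at hmem
    obtain ⟨j, hj⟩ := hmem
    have := congrFun hj j
    simp [eK] at this

lemma card_Aset : (Aset K).card = 2 ^ K - (K + 1) := by
  rw [Aset, Finset.card_compl, card_Bset]
  congr 1
  simp

/-- The node set of one block, tiled `c` times. -/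
abbrev PB (K c : ℕ) := Fin c × (Fin K ⊕ {a : Fin K → Bool // a ∈ Aset K})

/-- The block dynamics. -/
noncomputable def Fp (K c : ℕ) (z : PB K c → Bool) : PB K c → Bool
  | (i, Sum.inl j) => Finset.univ.sup fun k => Bool.xor (z (i, Sum.inl k)) (eK j k)
  | (i, Sum.inr a) => Finset.univ.inf fun k => Bool.xor (z (i, Sum.inl k)) (!a.val k)

def vblk {c : ℕ} (z : PB K c → Bool) (i : Fin c) : Fin K → Bool := fun k => z (i, Sum.inl k)

lemma Fp_inr {c : ℕ} (z : PB K c → Bool) (i : Fin c) (a : {a : Fin K → Bool // a ∈ Aset K}) :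
    Fp K c z (i, Sum.inr a) = decide (vblk z i = a.val) := inf_xor _ _

lemma vblk_Fp {c : ℕ} (z : PB K c → Bool) (i : Fin c) :
    vblk (Fp K c z) i = Gmap (vblk z i) := funext fun j => rfl

lemma Fp_obs (hK : 2 < K) {c : ℕ} (z z' : PB K c → Bool)
    (h : ∀ t (i : Fin c) (a : {a : Fin K → Bool // a ∈ Aset K}),
      (Fp K c)^[t] z (i, Sum.inr a) = (Fp K c)^[t] z' (i, Sum.inr a)) : z = z' := by
  have key : ∀ i : Fin c, vblk z i = vblk z' i := by
    intro i
    have h1 : ∀ a : {a : Fin K → Bool // a ∈ Aset K},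
        decide (vblk z i = a.val) = decide (vblk z' i = a.val) := by
      intro a
      have := h 1 i a
      simpa [Fp_inr] using this
    have h2 : ∀ a : {a : Fin K → Bool // a ∈ Aset K},
        decide (Gmap (vblk z i) = a.val) = decide (Gmap (vblk z' i) = a.val) := by
      intro a
      have := h 2 i a
      simpa [Function.iterate_succ_apply', Fp_inr, vblk_Fp] using this
    by_contra hne
    by_cases hv : vblk z i ∈ Aset K
    · have := h1 ⟨vblk z i, hv⟩
      simp at this
      exact hne this.symm
    · by_cases hv' : vblk z' i ∈ Aset K
      · have := h1 ⟨vblk z' i, hv'⟩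
        simp at this
        exact hne this
      · have hb : vblk z i ∈ Bset K := by
          by_contra hb; exact hv (Finset.mem_compl.mpr hb)
        have hb' : vblk z' i ∈ Bset K := by
          by_contra hb'; exact hv' (Finset.mem_compl.mpr hb')
        have hga : Gmap (vblk z i) ∈ Aset K := Gmap_mem_Aset hK hb
        have := h2 ⟨Gmap (vblk z i), hga⟩
        simp at this
        exact hne (Gmap_inj_Bset hb hb' this.symm)
  funext p
  obtain ⟨i, s⟩ := p
  cases s with
  | inl j => exact congrFun (key i) j
  | inr a => exact h 0 i a

end BNaux

theorem best_case_K_and_or (K n : ℕ) (hK : 2 < K) (hn : 2 ^ K - 1 ≤ n)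
    (hdvd : (2 ^ K - 1) ∣ n) :
    ∃ (F : (Fin n → Bool) → (Fin n → Bool)) (S : Finset (Fin n)),
      isAndOrBN K F ∧ S.card = ((2 ^ K - K - 1) * n) / (2 ^ K - 1) ∧ observable F S := by
  obtain ⟨c, hc⟩ := hdvd
  have hklt : K < 2 ^ K := Nat.lt_two_pow_self
  have hpos : 0 < 2 ^ K - 1 := by
    have : 2 ^ 1 ≤ 2 ^ K := Nat.pow_le_pow_right (by norm_num) (by omega)
    omega
  have hcardA : (BNaux.Aset K).card = 2 ^ K - (K + 1) := BNaux.card_Aset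
  have hcard : Fintype.card (BNaux.PB K c) = n := by
    have h1 : Fintype.card (BNaux.PB K c) = c * (K + (BNaux.Aset K).card) := by
      simp [BNaux.PB, Fintype.card_coe]
    rw [h1, hcardA, hc]
    have h2 : K + (2 ^ K - (K + 1)) = 2 ^ K - 1 := by omega
    rw [h2, Nat.mul_comm]
  let e : Fin n ≃ BNaux.PB K c := (Fintype.equivFinOfCardEq hcard).symm
  let Fn : (Fin n → Bool) → (Fin n → Bool) :=
    fun x i => BNaux.Fp K c (fun p => x (e.symm p)) (e i)
  let S : Finset (Fin n) :=
    ((Finset.univ : Finset (Fin c)) ×ˢ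
      ((Finset.univ : Finset {a : Fin K → Bool // a ∈ BNaux.Aset K}).map
        ⟨Sum.inr, Sum.inr_injective⟩)).map ⟨e.symm, e.symm.injective⟩
  have hiter : ∀ (w : Fin n → Bool) (t : ℕ),
      Fn^[t] w = fun i => (BNaux.Fp K c)^[t] (fun p => w (e.symm p)) (e i) := by
    intro w t
    induction t generalizing w with
    | zero => funext i; simp
    | succ t ih =>
      rw [Function.iterate_succ_apply, ih (Fn w), Function.iterate_succ_apply]
      have : (fun p => Fn w (e.symm p)) = BNaux.Fp K c (fun p => w (e.symm p)) := by
        funext p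
        show BNaux.Fp K c (fun q => w (e.symm q)) (e (e.symm p)) = _
        rw [e.apply_symm_apply]
      rw [this]
  refine ⟨Fn, S, ?_, ?_, ?_⟩
  · -- isAndOrBN
    intro i
    rcases hp : e i with ⟨blk, j | a⟩
    · refine ⟨fun k => e.symm (blk, Sum.inl k), ?_, BNaux.eK j, Or.inr fun x => ?_⟩
      · intro k k' hkk
        have := e.symm.injective hkk
        simpa using this
      · show BNaux.Fp K c (fun p => x (e.symm p)) (e i) = _
        rw [hp]
        rfl
    · refine ⟨fun k => e.symm (blk, Sum.inl k), ?_, fun k => !a.val k, Or.inl fun x => ?_⟩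
      · intro k k' hkk
        have := e.symm.injective hkk
        simpa using this
      · show BNaux.Fp K c (fun p => x (e.symm p)) (e i) = _
        rw [hp]
        rfl
  · -- cardinality
    have hS : S.card = c * (2 ^ K - (K + 1)) := by
      simp [S, Finset.card_map, hcardA]
    rw [hS, hc]
    rw [show (2 ^ K - K - 1) * ((2 ^ K - 1) * c) = (2 ^ K - 1) * ((2 ^ K - K - 1) * c) by ring,
      Nat.mul_div_cancel_left _ hpos]
    have h3 : 2 ^ K - (K + 1) = 2 ^ K - K - 1 := by omega
    rw [h3, Nat.mul_comm]
  · -- observable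
    intro x y hxy
    have hmem : ∀ (i : Fin c) (a : {a : Fin K → Bool // a ∈ BNaux.Aset K}),
        e.symm (i, Sum.inr a) ∈ S := by
      intro i a
      apply Finset.mem_map_of_mem
      refine Finset.mem_product.mpr ⟨Finset.mem_univ _, ?_⟩
      exact Finset.mem_map_of_mem _ (Finset.mem_univ a)
    have hk : ∀ t (i : Fin c) (a : {a : Fin K → Bool // a ∈ BNaux.Aset K}),
        (BNaux.Fp K c)^[t] (fun p => x (e.symm p)) (i, Sum.inr a) =
        (BNaux.Fp K c)^[t] (fun p => y (e.symm p)) (i, Sum.inr a) := by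
      intro t i a
      have h0 := congrFun (congrFun hxy t) ⟨e.symm (i, Sum.inr a), hmem i a⟩
      simp only at h0
      rw [hiter x t, hiter y t] at h0
      simpa [e.apply_symm_apply] using h0
    have heq := BNaux.Fp_obs hK _ _ hk
    funext i
    have h2 := congrFun heq (e i)
    simpa [e.symm_apply_apply] using h2
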